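/- Let p > 2, q = p/(p−1), δ > 0, and let Q be the Nazarov–Treil function Q(ζ,η) = |ζ|^p + |η|^q + δ·(|ζ|²|η|^{2−q} if |ζ|^p ≤ |η|^q, and (2/p)|ζ|^p + (2/q − 1)|η|^q if |ζ|^p ≥ |η|^q), for (ζ,η) ∈ ℝ²×ℝ². Then Q is C¹ on ℝ⁴. -/

import Mathlib

/-- The Nazarov–Treil Bellman function on `ℝ² × ℝ²`. -/
noncomputable def NTQ (p q δ : ℝ)
    (w : EuclideanSpace ℝ (Fin 2) × EuclideanSpace ℝ (Fin 2)) : ℝ :=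
  ‖w.1‖ ^ p + ‖w.2‖ ^ q +
    δ * (if ‖w.1‖ ^ p ≤ ‖w.2‖ ^ q then ‖w.1‖ ^ (2 : ℝ) * ‖w.2‖ ^ (2 - q)
      else (2 / p) * ‖w.1‖ ^ p + (2 / q - 1) * ‖w.2‖ ^ q)

open Real Asymptotics Filter Topology ContinuousLinearMap

variable {E : Type*} [NormedAddCommGroup E] [InnerProductSpace ℝ E]
variable {G : Type*} [NormedAddCommGroup G] [NormedSpace ℝ G]

lemma nt_rpow_split {x r : ℝ} (hx : 0 ≤ x) (hr : r ≠ 0) : x ^ r = x ^ (r - 1) * x := by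
  have hb := Real.rpow_add' (y := r - 1) (z := 1) hx (by simpa using hr)
  rw [Real.rpow_one] at hb
  have : r - 1 + 1 = r := by ring
  rwa [this] at hb

/-- little-o lemma: if |f x| ≤ ‖x‖^r with r > 1, then f has derivative 0 at 0. -/
lemma nt_little {f : G → ℝ} {r : ℝ} (hr : 1 < r) (h : ∀ x, |f x| ≤ ‖x‖ ^ r) :
    HasFDerivAt f (0 : G →L[ℝ] ℝ) 0 := by
  have hr0 : r ≠ 0 := by linarith
  have h0 : f 0 = 0 := by
    have := h 0
    simpa [Real.zero_rpow hr0] using this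
  rw [hasFDerivAt_iff_isLittleO_nhds_zero]
  simp only [h0, ContinuousLinearMap.zero_apply, sub_zero, zero_add]
  rw [Asymptotics.isLittleO_iff]
  intro c hc
  have tends : Tendsto (fun x : G => ‖x‖ ^ (r - 1)) (𝓝 0) (𝓝 0) := by
    have hcont : ContinuousAt (fun s : ℝ => s ^ (r - 1)) 0 :=
      Real.continuousAt_rpow_const 0 (r - 1) (Or.inr (by linarith))
    have hn : Tendsto (fun x : G => ‖x‖) (𝓝 0) (𝓝 0) := by
      simpa using (continuous_norm (E := G)).tendsto 0
    have := hcont.tendsto.comp hn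
    simpa [Function.comp_def, Real.zero_rpow (by linarith : r - 1 ≠ 0)] using this
  filter_upwards [tends.eventually (eventually_lt_nhds hc)] with x hx
  calc ‖f x‖ = |f x| := rfl
    _ ≤ ‖x‖ ^ r := h x
    _ = ‖x‖ ^ (r - 1) * ‖x‖ := nt_rpow_split (norm_nonneg x) (ne_of_gt (by linarith))
    _ ≤ c * ‖x‖ := mul_le_mul_of_nonneg_right hx.le (norm_nonneg x)

/-- derivative of ‖·‖^r at a nonzero point. -/
lemma nt_deriv_ne {r : ℝ} {x : E} (hx : x ≠ 0) :
    HasFDerivAt (fun y : E => ‖y‖ ^ r) ((r * ‖x‖ ^ (r - 2)) • (innerSL ℝ x)) x := by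
  have hinner : HasFDerivAt (fun y : E => (inner ℝ y y : ℝ)) ((2 : ℝ) • (innerSL ℝ x)) x := by
    have h := (hasFDerivAt_id x).inner ℝ (hasFDerivAt_id x)
    refine h.congr_fderiv ?_
    ext v
    simp [fderivInnerCLM_apply, real_inner_comm, two_smul]
  have hne : (inner ℝ x x : ℝ) ≠ 0 := by
    rw [real_inner_self_eq_norm_sq]
    exact pow_ne_zero 2 (norm_ne_zero_iff.mpr hx)
  have hrpow : HasDerivAt (fun s : ℝ => s ^ (r / 2)) ((r / 2) * (inner ℝ x x : ℝ) ^ (r / 2 - 1)) (inner ℝ x x) :=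
    Real.hasDerivAt_rpow_const (Or.inl hne)
  have hcomp := HasDerivAt.comp_hasFDerivAt (f := fun y : E => (inner ℝ y y : ℝ)) x hrpow hinner
  have key : ∀ y : E, ((inner ℝ y y : ℝ)) ^ (r / 2) = ‖y‖ ^ r := by
    intro y
    rw [real_inner_self_eq_norm_sq, ← Real.rpow_natCast ‖y‖ 2, ← Real.rpow_mul (norm_nonneg y)]
    congr 1
    push_cast; ring
  have heq : (fun y : E => ‖y‖ ^ r) = (fun s : ℝ => s ^ (r / 2)) ∘ (fun y : E => (inner ℝ y y : ℝ)) := by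
    funext y; exact (key y).symm
  rw [heq]
  refine hcomp.congr_fderiv ?_
  rw [smul_smul]
  congr 1
  rw [real_inner_self_eq_norm_sq, ← Real.rpow_natCast ‖x‖ 2, ← Real.rpow_mul (norm_nonneg x)]
  have h2 : ((2:ℕ):ℝ) * (r / 2 - 1) = r - 2 := by push_cast; ring
  rw [h2]; ring

/-- derivative of ‖·‖^r at any point, for r > 1. -/
lemma nt_deriv {r : ℝ} (hr : 1 < r) (x : E) :
    HasFDerivAt (fun y : E => ‖y‖ ^ r) ((r * ‖x‖ ^ (r - 2)) • (innerSL ℝ x)) x := by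
  rcases eq_or_ne x 0 with rfl | hx
  · have h0 : ((r * ‖(0:E)‖ ^ (r - 2)) • (innerSL ℝ (0:E))) = 0 := by simp
    rw [h0]
    exact nt_little hr (fun x => by
      rw [abs_of_nonneg (Real.rpow_nonneg (norm_nonneg x) r)])
  · exact nt_deriv_ne hx

/-- Gluing lemma for derivatives: if `f` agrees pointwise with one of two functions
having the same derivative at `a` and the same value at `a`, then `f` is differentiable. -/
lemma nt_glue {F : Type*} [NormedAddCommGroup F] [NormedSpace ℝ F]
    {f g₁ g₂ : G → F} {L : G →L[ℝ] F} {a : G}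
    (h₁ : HasFDerivAt g₁ L a) (h₂ : HasFDerivAt g₂ L a)
    (e₁ : g₁ a = f a) (e₂ : g₂ a = f a)
    (hf : ∀ x, f x = g₁ x ∨ f x = g₂ x) : HasFDerivAt f L a := by
  rw [hasFDerivAt_iff_isLittleO_nhds_zero] at h₁ h₂ ⊢
  have hsum : (fun h => ‖g₁ (a + h) - g₁ a - L h‖ + ‖g₂ (a + h) - g₂ a - L h‖)
      =o[𝓝 0] (fun h : G => h) := h₁.norm_left.add h₂.norm_left
  refine (Asymptotics.isBigO_of_le _ (fun h => ?_)).trans_isLittleO hsum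
  have hn1 : (0:ℝ) ≤ ‖g₁ (a + h) - g₁ a - L h‖ := norm_nonneg _
  have hn2 : (0:ℝ) ≤ ‖g₂ (a + h) - g₂ a - L h‖ := norm_nonneg _
  rw [Real.norm_of_nonneg (by linarith)]
  rcases hf (a + h) with he | he
  · rw [he, ← e₁]; linarith
  · rw [he, ← e₂]; linarith

/-- Gluing lemma for continuity. -/
lemma nt_glue_cont {α β : Type*} [TopologicalSpace α] [PseudoMetricSpace β]
    {f g₁ g₂ : α → β} {a : α}
    (h₁ : ContinuousAt g₁ a) (h₂ : ContinuousAt g₂ a)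
    (e₁ : g₁ a = f a) (e₂ : g₂ a = f a)
    (hf : ∀ x, f x = g₁ x ∨ f x = g₂ x) : ContinuousAt f a := by
  rw [ContinuousAt, tendsto_iff_dist_tendsto_zero]
  have t1 : Filter.Tendsto (fun x => dist (g₁ x) (g₁ a)) (𝓝 a) (𝓝 0) :=
    tendsto_iff_dist_tendsto_zero.mp h₁
  have t2 : Filter.Tendsto (fun x => dist (g₂ x) (g₂ a)) (𝓝 a) (𝓝 0) :=
    tendsto_iff_dist_tendsto_zero.mp h₂
  refine squeeze_zero (fun x => dist_nonneg) (g := fun x => dist (g₁ x) (g₁ a) + dist (g₂ x) (g₂ a)) (fun x => ?_) (by simpa using t1.add t2)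
  rcases hf x with he | he
  · rw [he, ← e₁]; have := dist_nonneg (x := g₂ x) (y := g₂ a); linarith
  · rw [he, ← e₂]; have := dist_nonneg (x := g₁ x) (y := g₁ a); linarith

noncomputable section

abbrev E2 : Type := EuclideanSpace ℝ (Fin 2)

def ntP1 (v : E2) : E2 × E2 →L[ℝ] ℝ := (innerSL ℝ v).comp (ContinuousLinearMap.fst ℝ E2 E2)
def ntP2 (v : E2) : E2 × E2 →L[ℝ] ℝ := (innerSL ℝ v).comp (ContinuousLinearMap.snd ℝ E2 E2)

def ntQ1 (p q δ : ℝ) (w : E2 × E2) : ℝ :=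
  ‖w.1‖ ^ p + ‖w.2‖ ^ q + δ * (‖w.1‖ ^ (2:ℝ) * ‖w.2‖ ^ (2 - q))

def ntQ2 (p q δ : ℝ) (w : E2 × E2) : ℝ :=
  ‖w.1‖ ^ p + ‖w.2‖ ^ q + δ * ((2/p) * ‖w.1‖ ^ p + (2/q - 1) * ‖w.2‖ ^ q)

def ntV (p q δ : ℝ) (w : E2 × E2) : E2 :=
  if ‖w.1‖ ^ p ≤ ‖w.2‖ ^ q then (p * ‖w.1‖ ^ (p-2) + 2*δ*‖w.2‖ ^ (2-q)) • w.1
  else ((p + 2*δ) * ‖w.1‖ ^ (p-2)) • w.1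

def ntW (p q δ : ℝ) (w : E2 × E2) : E2 :=
  if ‖w.1‖ ^ p ≤ ‖w.2‖ ^ q then
    (q * ‖w.2‖ ^ (q-2) + δ*(2-q) * ‖w.1‖ ^ (2:ℝ) * ‖w.2‖ ^ (-q)) • w.2
  else ((q + δ*(2-q)) * ‖w.2‖ ^ (q-2)) • w.2

def ntD (p q δ : ℝ) (w : E2 × E2) : E2 × E2 →L[ℝ] ℝ :=
  ntP1 (ntV p q δ w) + ntP2 (ntW p q δ w)

lemma hasQ1 {p q : ℝ} (δ : ℝ) (hp : 1 < p) (w : E2 × E2) (h2 : w.2 ≠ 0) :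
    HasFDerivAt (ntQ1 p q δ)
      (ntP1 ((p * ‖w.1‖ ^ (p-2) + 2*δ*‖w.2‖ ^ (2-q)) • w.1) +
        ntP2 ((q * ‖w.2‖ ^ (q-2) + δ*(2-q) * ‖w.1‖ ^ (2:ℝ) * ‖w.2‖ ^ (-q)) • w.2)) w := by
  have hA : HasFDerivAt (fun y : E2 × E2 => ‖y.1‖ ^ p)
      (((p * ‖w.1‖ ^ (p - 2)) • (innerSL ℝ w.1)).comp (ContinuousLinearMap.fst ℝ E2 E2)) w := by
    simpa [Function.comp_def] using (nt_deriv hp w.1).comp w hasFDerivAt_fst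
  have hB : HasFDerivAt (fun y : E2 × E2 => ‖y.2‖ ^ q)
      (((q * ‖w.2‖ ^ (q - 2)) • (innerSL ℝ w.2)).comp (ContinuousLinearMap.snd ℝ E2 E2)) w := by
    simpa [Function.comp_def] using (nt_deriv_ne (r := q) h2).comp w hasFDerivAt_snd
  have hC : HasFDerivAt (fun y : E2 × E2 => ‖y.1‖ ^ (2:ℝ))
      ((((2:ℝ) * ‖w.1‖ ^ ((2:ℝ) - 2)) • (innerSL ℝ w.1)).comp (ContinuousLinearMap.fst ℝ E2 E2)) w := by
    simpa [Function.comp_def] using (nt_deriv (by norm_num : (1:ℝ) < 2) w.1).comp w hasFDerivAt_fst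
  have hD : HasFDerivAt (fun y : E2 × E2 => ‖y.2‖ ^ (2 - q))
      ((((2 - q) * ‖w.2‖ ^ (2 - q - 2)) • (innerSL ℝ w.2)).comp (ContinuousLinearMap.snd ℝ E2 E2)) w := by
    simpa [Function.comp_def] using (nt_deriv_ne (r := 2 - q) h2).comp w hasFDerivAt_snd
  have hprod := (hC.mul hD).const_mul δ
  have htot := (hA.add hB).add hprod
  have hfun : (fun y : E2 × E2 => ‖y.1‖ ^ p + ‖y.2‖ ^ q + δ * (‖y.1‖ ^ (2:ℝ) * ‖y.2‖ ^ (2 - q)))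
      = ntQ1 p q δ := rfl
  change HasFDerivAt (ntQ1 p q δ) _ w at htot
  refine htot.congr_fderiv ?_
  have he : (2:ℝ) - q - 2 = -q := by ring
  rw [he] at htot ⊢
  apply ContinuousLinearMap.ext
  intro u
  simp only [ntP1, ntP2, ContinuousLinearMap.add_apply, ContinuousLinearMap.comp_apply,
    ContinuousLinearMap.coe_fst', ContinuousLinearMap.coe_snd', ContinuousLinearMap.smul_apply,
    innerSL_apply_apply, real_inner_smul_left, smul_eq_mul, sub_self, Real.rpow_zero]
  ring

lemma hasQ2 {p q : ℝ} (δ : ℝ) (hp : 1 < p) (hq1 : 1 < q) (w : E2 × E2) :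
    HasFDerivAt (ntQ2 p q δ)
      (ntP1 (((p + 2*δ) * ‖w.1‖ ^ (p-2)) • w.1) +
        ntP2 (((q + δ*(2-q)) * ‖w.2‖ ^ (q-2)) • w.2)) w := by
  have hA : HasFDerivAt (fun y : E2 × E2 => ‖y.1‖ ^ p)
      (((p * ‖w.1‖ ^ (p - 2)) • (innerSL ℝ w.1)).comp (ContinuousLinearMap.fst ℝ E2 E2)) w := by
    simpa [Function.comp_def] using (nt_deriv hp w.1).comp w hasFDerivAt_fst
  have hB : HasFDerivAt (fun y : E2 × E2 => ‖y.2‖ ^ q)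
      (((q * ‖w.2‖ ^ (q - 2)) • (innerSL ℝ w.2)).comp (ContinuousLinearMap.snd ℝ E2 E2)) w := by
    simpa [Function.comp_def] using (nt_deriv hq1 w.2).comp w hasFDerivAt_snd
  have htot := (hA.add hB).add (((hA.const_mul (2/p)).add (hB.const_mul (2/q - 1))).const_mul δ)
  have hfun : (fun y : E2 × E2 => ‖y.1‖ ^ p + ‖y.2‖ ^ q +
      δ * ((2/p) * ‖y.1‖ ^ p + (2/q - 1) * ‖y.2‖ ^ q)) = ntQ2 p q δ := rfl
  change HasFDerivAt (ntQ2 p q δ) _ w at htot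
  refine htot.congr_fderiv ?_
  apply ContinuousLinearMap.ext
  intro u
  have hp0 : p ≠ 0 := by linarith
  have hq0 : q ≠ 0 := by linarith
  simp only [ntP1, ntP2, ContinuousLinearMap.add_apply, ContinuousLinearMap.comp_apply,
    ContinuousLinearMap.coe_fst', ContinuousLinearMap.coe_snd', ContinuousLinearMap.smul_apply,
    innerSL_apply_apply, real_inner_smul_left, smul_eq_mul]
  field_simp
  ring

section Identities

variable {p q : ℝ} (hp : 2 < p) (hq : q = p / (p - 1))

include hp hq

lemma nt_q1 : 1 < q := by
  rw [hq]; rw [one_lt_div (by linarith)]; linarith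

lemma nt_q2 : q < 2 := by
  rw [hq, div_lt_iff₀ (by linarith)]; linarith

lemma nt_pq : p * q = p + q := by
  have h1 : p - 1 ≠ 0 := by intro h; rw [hq] at *; nlinarith
  rw [hq]; field_simp; ring

/-- identities on the interface, at a point with `s^p = t^q`, `t ≠ 0`. -/
lemma nt_id1 {s t : ℝ} (hs : 0 ≤ s) (ht : 0 < t) (hw : s ^ p = t ^ q) :
    t ^ (2 - q) = s ^ (p - 2) := by
  have hq1 : 1 < q := nt_q1 hp hq
  have hpq := nt_pq hp hq
  have hq0 : q ≠ 0 := by linarith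
  have hs0 : 0 < s := by
    rcases hs.lt_or_eq with h | h
    · exact h
    · exfalso
      have : t ^ q = 0 := by rw [← hw, ← h, Real.zero_rpow (by linarith : p ≠ 0)]
      have := Real.rpow_pos_of_pos ht q
      linarith
  calc t ^ (2 - q) = (t ^ q) ^ ((2 - q)/q) := by
        rw [← Real.rpow_mul ht.le]; congr 1; field_simp
    _ = (s ^ p) ^ ((2 - q)/q) := by rw [hw]
    _ = s ^ (p * ((2 - q)/q)) := by rw [← Real.rpow_mul hs0.le]
    _ = s ^ (p - 2) := by
        congr 1
        field_simp
        linear_combination (-2 : ℝ) * hpq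

lemma nt_id2 {s t : ℝ} (hs : 0 ≤ s) (ht : 0 < t) (hw : s ^ p = t ^ q) :
    s ^ (2:ℝ) * t ^ (-q) = t ^ (q - 2) := by
  have hq1 : 1 < q := nt_q1 hp hq
  have hpq := nt_pq hp hq
  have hp0 : p ≠ 0 := by linarith
  calc s ^ (2:ℝ) * t ^ (-q) = (s ^ p) ^ (2/p) * t ^ (-q) := by
        rw [← Real.rpow_mul hs]; congr 2; field_simp
    _ = (t ^ q) ^ (2/p) * t ^ (-q) := by rw [hw]
    _ = t ^ (q * (2/p)) * t ^ (-q) := by rw [← Real.rpow_mul ht.le]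
    _ = t ^ (q * (2/p) + (-q)) := (Real.rpow_add ht _ _).symm
    _ = t ^ (q - 2) := by
        congr 1
        field_simp
        linear_combination (-2 : ℝ) * hpq

lemma nt_id3 {s t : ℝ} (hs : 0 ≤ s) (ht : 0 < t) (hw : s ^ p = t ^ q) :
    s ^ (2:ℝ) * t ^ (2 - q) = (2/p) * s ^ p + (2/q - 1) * t ^ q := by
  have hq1 : 1 < q := nt_q1 hp hq
  have hpq := nt_pq hp hq
  have hp0 : p ≠ 0 := by linarith
  have hq0 : q ≠ 0 := by linarith
  have hs0 : 0 < s := by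
    rcases hs.lt_or_eq with h | h
    · exact h
    · exfalso
      have : t ^ q = 0 := by rw [← hw, ← h, Real.zero_rpow hp0]
      have := Real.rpow_pos_of_pos ht q
      linarith
  rw [nt_id1 hp hq hs ht hw, ← hw]
  rw [← Real.rpow_add hs0]
  have h2 : (2:ℝ) + (p - 2) = p := by ring
  rw [h2]
  have h3 : (2/p) + (2/q - 1) = 1 := by field_simp; linear_combination (-2 : ℝ) * hpq
  nlinarith [h3, Real.rpow_pos_of_pos hs0 p]

end Identities

lemma nt_contS {r : ℝ} (hr : 0 ≤ r) : Continuous fun y : E2 × E2 => ‖y.1‖ ^ r := by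
  rw [continuous_iff_continuousAt]
  intro y
  exact (Real.continuousAt_rpow_const _ _ (Or.inr hr)).comp
    ((continuous_norm.comp continuous_fst).continuousAt)

lemma nt_contT {r : ℝ} (hr : 0 ≤ r) : Continuous fun y : E2 × E2 => ‖y.2‖ ^ r := by
  rw [continuous_iff_continuousAt]
  intro y
  exact (Real.continuousAt_rpow_const _ _ (Or.inr hr)).comp
    ((continuous_norm.comp continuous_snd).continuousAt)

section Main

variable {p q : ℝ} (δ : ℝ) (hp : 2 < p) (hq : q = p / (p - 1))

lemma nt_cases (w : E2 × E2) :
    NTQ p q δ w = ntQ1 p q δ w ∨ NTQ p q δ w = ntQ2 p q δ w := by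
  by_cases h : ‖w.1‖ ^ p ≤ ‖w.2‖ ^ q
  · left; simp [NTQ, ntQ1, if_pos h]
  · right; simp [NTQ, ntQ2, if_neg h]

include hp hq

lemma nt_hasD (w : E2 × E2) : HasFDerivAt (NTQ p q δ) (ntD p q δ w) w := by
  have hq1 : 1 < q := nt_q1 hp hq
  have hq2 : q < 2 := nt_q2 hp hq
  have hp1 : 1 < p := by linarith
  have hp0 : p ≠ 0 := by linarith
  have hq0 : q ≠ 0 := by linarith
  rcases lt_trichotomy (‖w.1‖ ^ p) (‖w.2‖ ^ q) with hlt | heq | hgt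
  · -- interior of region 1
    have ht : w.2 ≠ 0 := by
      intro h
      rw [h] at hlt
      simp only [norm_zero, Real.zero_rpow hq0] at hlt
      exact absurd hlt (not_lt.mpr (Real.rpow_nonneg (norm_nonneg _) _))
    have hopen : IsOpen {y : E2 × E2 | ‖y.1‖ ^ p < ‖y.2‖ ^ q} :=
      isOpen_lt (nt_contS (by linarith)) (nt_contT (by linarith))
    have hev : NTQ p q δ =ᶠ[𝓝 w] ntQ1 p q δ :=
      eventually_of_mem (hopen.mem_nhds hlt)
        (fun y hy => by
        simp only [Set.mem_setOf_eq] at hy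
        simp [NTQ, ntQ1, if_pos (le_of_lt hy)])
    have hD : ntD p q δ w = ntP1 ((p * ‖w.1‖ ^ (p-2) + 2*δ*‖w.2‖ ^ (2-q)) • w.1) +
        ntP2 ((q * ‖w.2‖ ^ (q-2) + δ*(2-q) * ‖w.1‖ ^ (2:ℝ) * ‖w.2‖ ^ (-q)) • w.2) := by
      simp only [ntD, ntV, ntW, if_pos hlt.le]
    rw [hD]
    exact (hasQ1 δ hp1 w ht).congr_of_eventuallyEq hev
  · by_cases ht : w.2 = 0
    · -- the origin
      have hs0 : ‖w.1‖ ^ p = 0 := by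
        rw [heq, ht]; simp [Real.zero_rpow hq0]
      have hs : w.1 = 0 := by
        by_contra h
        exact absurd hs0 (ne_of_gt (Real.rpow_pos_of_pos (norm_pos_iff.mpr h) p))
      have hw0 : w = 0 := by rw [Prod.ext_iff]; exact ⟨hs, ht⟩
      subst hw0
      have hD0 : ntD p q δ (0 : E2 × E2) = 0 := by
        simp [ntD, ntV, ntW, ntP1, ntP2]
      rw [hD0]
      have hA : HasFDerivAt (fun y : E2 × E2 => ‖y.1‖ ^ p) (0 : E2 × E2 →L[ℝ] ℝ) 0 := by
        have := (nt_deriv hp1 ((0 : E2 × E2).1)).comp (0 : E2 × E2) hasFDerivAt_fst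
        simpa [Function.comp_def] using this
      have hB : HasFDerivAt (fun y : E2 × E2 => ‖y.2‖ ^ q) (0 : E2 × E2 →L[ℝ] ℝ) 0 := by
        have := (nt_deriv hq1 ((0 : E2 × E2).2)).comp (0 : E2 × E2) hasFDerivAt_snd
        simpa [Function.comp_def] using this
      have hprod : HasFDerivAt (fun y : E2 × E2 => ‖y.1‖ ^ (2:ℝ) * ‖y.2‖ ^ (2 - q))
          (0 : E2 × E2 →L[ℝ] ℝ) 0 := by
        refine nt_little (r := 4 - q) (by linarith) (fun x => ?_)
        have h1 : |‖x.1‖ ^ (2:ℝ) * ‖x.2‖ ^ (2 - q)| = ‖x.1‖ ^ (2:ℝ) * ‖x.2‖ ^ (2 - q) :=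
          abs_of_nonneg (mul_nonneg (Real.rpow_nonneg (norm_nonneg _) _)
            (Real.rpow_nonneg (norm_nonneg _) _))
        rw [h1, show (4:ℝ) - q = 2 + (2 - q) by ring,
          Real.rpow_add' (norm_nonneg x) (by linarith : (2:ℝ) + (2 - q) ≠ 0)]
        exact mul_le_mul (Real.rpow_le_rpow (norm_nonneg _) (norm_fst_le x) (by norm_num))
          (Real.rpow_le_rpow (norm_nonneg _) (norm_snd_le x) (by linarith))
          (Real.rpow_nonneg (norm_nonneg _) _) (Real.rpow_nonneg (norm_nonneg _) _)
      have h1 : HasFDerivAt (ntQ1 p q δ) (0 : E2 × E2 →L[ℝ] ℝ) 0 := by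
        have htot := (hA.add hB).add (hprod.const_mul δ)
        have hfun : (fun y : E2 × E2 => ‖y.1‖ ^ p + ‖y.2‖ ^ q +
            δ * (‖y.1‖ ^ (2:ℝ) * ‖y.2‖ ^ (2 - q))) = ntQ1 p q δ := rfl
        change HasFDerivAt (ntQ1 p q δ) _ 0 at htot
        simpa using htot
      have h2 : HasFDerivAt (ntQ2 p q δ) (0 : E2 × E2 →L[ℝ] ℝ) 0 := by
        have := hasQ2 δ hp1 hq1 (0 : E2 × E2)
        simpa [ntP1, ntP2] using this
      have e1 : ntQ1 p q δ 0 = NTQ p q δ 0 := by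
        simp [ntQ1, NTQ, Real.zero_rpow hp0, Real.zero_rpow hq0,
          Real.zero_rpow (two_ne_zero), Real.zero_rpow (by linarith : (2:ℝ) - q ≠ 0)]
      have e2 : ntQ2 p q δ 0 = NTQ p q δ 0 := by
        simp [ntQ2, NTQ, Real.zero_rpow hp0, Real.zero_rpow hq0,
          Real.zero_rpow (two_ne_zero), Real.zero_rpow (by linarith : (2:ℝ) - q ≠ 0)]
      exact nt_glue h1 h2 e1 e2 (nt_cases δ)
    · -- the interface away from the origin
      have ht' : 0 < ‖w.2‖ := norm_pos_iff.mpr ht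
      have i1 := nt_id1 hp hq (norm_nonneg w.1) ht' heq
      have i2 := nt_id2 hp hq (norm_nonneg w.1) ht' heq
      have hD : ntD p q δ w = ntP1 ((p * ‖w.1‖ ^ (p-2) + 2*δ*‖w.2‖ ^ (2-q)) • w.1) +
          ntP2 ((q * ‖w.2‖ ^ (q-2) + δ*(2-q) * ‖w.1‖ ^ (2:ℝ) * ‖w.2‖ ^ (-q)) • w.2) := by
        simp only [ntD, ntV, ntW, if_pos heq.le]
      rw [hD]
      have h1 := hasQ1 (q := q) δ hp1 w ht
      have h2 : HasFDerivAt (ntQ2 p q δ)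
          (ntP1 ((p * ‖w.1‖ ^ (p-2) + 2*δ*‖w.2‖ ^ (2-q)) • w.1) +
            ntP2 ((q * ‖w.2‖ ^ (q-2) + δ*(2-q) * ‖w.1‖ ^ (2:ℝ) * ‖w.2‖ ^ (-q)) • w.2)) w := by
        have h := hasQ2 δ hp1 hq1 w
        have hv : ((p + 2*δ) * ‖w.1‖ ^ (p-2)) • w.1
            = (p * ‖w.1‖ ^ (p-2) + 2*δ*‖w.2‖ ^ (2-q)) • w.1 := by
          congr 1; rw [i1]; ring
        have hw' : ((q + δ*(2-q)) * ‖w.2‖ ^ (q-2)) • w.2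
            = (q * ‖w.2‖ ^ (q-2) + δ*(2-q) * ‖w.1‖ ^ (2:ℝ) * ‖w.2‖ ^ (-q)) • w.2 := by
          congr 1; linear_combination (-(δ*(2-q))) * i2
        rw [hv, hw'] at h
        exact h
      have e1 : ntQ1 p q δ w = NTQ p q δ w := by
        simp only [NTQ, ntQ1, if_pos heq.le]
      have e2 : ntQ2 p q δ w = NTQ p q δ w := by
        simp only [NTQ, ntQ2, if_pos heq.le]
        rw [nt_id3 hp hq (norm_nonneg w.1) ht' heq]
      exact nt_glue h1 h2 e1 e2 (nt_cases δ)
  · -- interior of region 2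
    have hopen : IsOpen {y : E2 × E2 | ‖y.2‖ ^ q < ‖y.1‖ ^ p} :=
      isOpen_lt (nt_contT (by linarith)) (nt_contS (by linarith))
    have hev : NTQ p q δ =ᶠ[𝓝 w] ntQ2 p q δ :=
      eventually_of_mem (hopen.mem_nhds hgt)
        (fun y hy => by
        simp only [Set.mem_setOf_eq] at hy
        simp [NTQ, ntQ2, if_neg (not_le.mpr hy)])
    have hD : ntD p q δ w = ntP1 (((p + 2*δ) * ‖w.1‖ ^ (p-2)) • w.1) +
        ntP2 (((q + δ*(2-q)) * ‖w.2‖ ^ (q-2)) • w.2) := by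
      simp only [ntD, ntV, ntW, if_neg (not_le.mpr hgt)]
    rw [hD]
    exact (hasQ2 δ hp1 hq1 w).congr_of_eventuallyEq hev

end Main

lemma nt_rpow_succ {t a : ℝ} (ht : 0 ≤ t) (h : a + 1 ≠ 0) : t ^ a * t = t ^ (a + 1) := by
  rw [Real.rpow_add' ht h, Real.rpow_one]

lemma nt_contAtT {y : E2 × E2} (hy : y.2 ≠ 0) (r : ℝ) :
    ContinuousAt (fun w : E2 × E2 => ‖w.2‖ ^ r) y := by
  have h1 : ContinuousAt (fun w : E2 × E2 => ‖w.2‖) y :=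
    (continuous_norm.comp continuous_snd).continuousAt
  exact h1.rpow_const (Or.inl (norm_ne_zero_iff.mpr hy))

section Cont

variable {p q δ : ℝ} (hp : 2 < p) (hq : q = p / (p - 1)) (hδ : 0 < δ)

include hp hq

lemma nt_contV : Continuous (ntV p q δ) := by
  have hq1 : 1 < q := nt_q1 hp hq
  have hq2 : q < 2 := nt_q2 hp hq
  have hf : Continuous (fun w : E2 × E2 => (p * ‖w.1‖ ^ (p-2) + 2*δ*‖w.2‖ ^ (2-q)) • w.1) :=
    (((continuous_const.mul (nt_contS (by linarith))).add
      (continuous_const.mul (nt_contT (by linarith)))).smul continuous_fst)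
  have hg : Continuous (fun w : E2 × E2 => ((p + 2*δ) * ‖w.1‖ ^ (p-2)) • w.1) :=
    ((continuous_const.mul (nt_contS (by linarith))).smul continuous_fst)
  unfold ntV
  apply Continuous.if ?_ hf hg
  intro a ha
  have hfr : ‖a.1‖ ^ p = ‖a.2‖ ^ q :=
    frontier_le_subset_eq (nt_contS (by linarith)) (nt_contT (by linarith)) ha
  by_cases h2 : a.2 = 0
  · have hs0 : ‖a.1‖ ^ p = 0 := by
      rw [hfr, h2]; simp [Real.zero_rpow (show q ≠ 0 by linarith)]
    have hs : a.1 = 0 := by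
      by_contra h
      exact absurd hs0 (ne_of_gt (Real.rpow_pos_of_pos (norm_pos_iff.mpr h) p))
    rw [hs]; simp
  · have i1 := nt_id1 hp hq (norm_nonneg a.1) (norm_pos_iff.mpr h2) hfr
    congr 1
    rw [i1]; ring

include hδ

lemma nt_W_bound (y : E2 × E2) :
    ‖ntW p q δ y‖ ≤ q * ‖y.2‖ ^ (q-1) + δ*(2-q) * ‖y.2‖ ^ (q/p)
      + (q + δ*(2-q)) * ‖y.2‖ ^ (q-1) := by
  have hq1 : 1 < q := nt_q1 hp hq
  have hq2 : q < 2 := nt_q2 hp hq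
  have hpq := nt_pq hp hq
  have hp0 : p ≠ 0 := by linarith
  have e1 : ‖y.2‖ ^ (q-2) * ‖y.2‖ = ‖y.2‖ ^ (q-1) := by
    rw [nt_rpow_succ (norm_nonneg _) (show q-2+1 ≠ 0 by intro h; apply (show q ≠ 1 by linarith); linarith)]
    congr 1; ring
  have h3nn : (0:ℝ) ≤ (q + δ*(2-q)) * ‖y.2‖ ^ (q-1) :=
    mul_nonneg (by nlinarith) (Real.rpow_nonneg (norm_nonneg _) _)
  have h1nn : (0:ℝ) ≤ q * ‖y.2‖ ^ (q-1) :=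
    mul_nonneg (by linarith) (Real.rpow_nonneg (norm_nonneg _) _)
  have h2nn : (0:ℝ) ≤ δ*(2-q) * ‖y.2‖ ^ (q/p) :=
    mul_nonneg (by nlinarith) (Real.rpow_nonneg (norm_nonneg _) _)
  by_cases hc : ‖y.1‖ ^ p ≤ ‖y.2‖ ^ q
  · have hW : ntW p q δ y
        = (q * ‖y.2‖ ^ (q-2) + δ*(2-q) * ‖y.1‖ ^ (2:ℝ) * ‖y.2‖ ^ (-q)) • y.2 := by
      simp [ntW, if_pos hc]
    have hnn : 0 ≤ q * ‖y.2‖ ^ (q-2) + δ*(2-q) * ‖y.1‖ ^ (2:ℝ) * ‖y.2‖ ^ (-q) := by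
      have r1 := Real.rpow_nonneg (norm_nonneg y.2) (q-2)
      have r2 := Real.rpow_nonneg (norm_nonneg y.2) (-q)
      have r3 := Real.rpow_nonneg (norm_nonneg y.1) (2:ℝ)
      have h2q : (0:ℝ) ≤ δ*(2-q) := mul_nonneg hδ.le (by linarith)
      refine add_nonneg (mul_nonneg (by linarith) r1) ?_
      exact mul_nonneg (mul_nonneg h2q r3) r2
    rw [hW, norm_smul, Real.norm_eq_abs, abs_of_nonneg hnn]
    have e2 : ‖y.2‖ ^ (-q) * ‖y.2‖ = ‖y.2‖ ^ (1-q) := by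
      rw [nt_rpow_succ (norm_nonneg _) (show -q+1 ≠ 0 by intro h; apply (show q ≠ 1 by linarith); linarith)]
      congr 1; ring
    have expand : (q * ‖y.2‖ ^ (q-2) + δ*(2-q) * ‖y.1‖ ^ (2:ℝ) * ‖y.2‖ ^ (-q)) * ‖y.2‖
        = q * ‖y.2‖ ^ (q-1) + δ*(2-q) * (‖y.1‖ ^ (2:ℝ) * ‖y.2‖ ^ (1-q)) := by
      rw [← e1, ← e2]; ring
    rw [expand]
    have hs_le : ‖y.1‖ ≤ ‖y.2‖ ^ (q/p) := by
      have h1 : (‖y.1‖ ^ p) ^ p⁻¹ ≤ (‖y.2‖ ^ q) ^ p⁻¹ :=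
        Real.rpow_le_rpow (Real.rpow_nonneg (norm_nonneg _) _) hc (by positivity)
      rw [← Real.rpow_mul (norm_nonneg y.1), ← Real.rpow_mul (norm_nonneg y.2),
        mul_inv_cancel₀ hp0, Real.rpow_one, ← div_eq_mul_inv] at h1
      exact h1
    have hexp : (q/p)*2 + (1-q) = q/p := by
      field_simp
      linear_combination (-1:ℝ) * hpq
    have key : ‖y.1‖ ^ (2:ℝ) * ‖y.2‖ ^ (1-q) ≤ ‖y.2‖ ^ (q/p) := by
      have h2 : ‖y.1‖ ^ (2:ℝ) ≤ (‖y.2‖ ^ (q/p)) ^ (2:ℝ) :=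
        Real.rpow_le_rpow (norm_nonneg _) hs_le (by norm_num)
      have h3 : (‖y.2‖ ^ (q/p)) ^ (2:ℝ) = ‖y.2‖ ^ ((q/p)*2) := by
        rw [← Real.rpow_mul (norm_nonneg _)]
      have h4 : ‖y.2‖ ^ ((q/p)*2) * ‖y.2‖ ^ (1-q) = ‖y.2‖ ^ (q/p) := by
        rw [← Real.rpow_add' (norm_nonneg _) (by
          rw [hexp]
          exact ne_of_gt (div_pos (by linarith) (by linarith)))]
        rw [hexp]
      calc ‖y.1‖ ^ (2:ℝ) * ‖y.2‖ ^ (1-q)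
          ≤ ‖y.2‖ ^ ((q/p)*2) * ‖y.2‖ ^ (1-q) :=
            mul_le_mul_of_nonneg_right (h3 ▸ h2) (Real.rpow_nonneg (norm_nonneg _) _)
        _ = ‖y.2‖ ^ (q/p) := h4
    have hkey2 : δ*(2-q) * (‖y.1‖ ^ (2:ℝ) * ‖y.2‖ ^ (1-q)) ≤ δ*(2-q) * ‖y.2‖ ^ (q/p) :=
      mul_le_mul_of_nonneg_left key (by nlinarith)
    linarith
  · have hW : ntW p q δ y = ((q + δ*(2-q)) * ‖y.2‖ ^ (q-2)) • y.2 := by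
      simp [ntW, if_neg hc]
    have hnn : (0:ℝ) ≤ (q + δ*(2-q)) * ‖y.2‖ ^ (q-2) :=
      mul_nonneg (by nlinarith) (Real.rpow_nonneg (norm_nonneg _) _)
    rw [hW, norm_smul, Real.norm_eq_abs, abs_of_nonneg hnn, mul_assoc, e1]
    linarith

end Cont

section Cont2

variable {p q δ : ℝ} (hp : 2 < p) (hq : q = p / (p - 1)) (hδ : 0 < δ)

include hp hq hδ

lemma nt_contW : Continuous (ntW p q δ) := by
  have hq1 : 1 < q := nt_q1 hp hq
  have hq2 : q < 2 := nt_q2 hp hq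
  have hp0 : p ≠ 0 := by linarith
  have hq0 : q ≠ 0 := by linarith
  have e1y : ∀ y : E2 × E2, ‖y.2‖ ^ (q-2) * ‖y.2‖ = ‖y.2‖ ^ (q-1) := by
    intro y
    rw [nt_rpow_succ (norm_nonneg _) (show q-2+1 ≠ 0 by intro h; apply (show q ≠ 1 by linarith); linarith)]
    congr 1; ring
  have hW1at : ∀ y : E2 × E2, y.2 ≠ 0 → ContinuousAt
      (fun y : E2 × E2 => (q * ‖y.2‖ ^ (q-2) + δ*(2-q) * ‖y.1‖ ^ (2:ℝ) * ‖y.2‖ ^ (-q)) • y.2) y := by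
    intro y hy
    refine ContinuousAt.smul (?_ : ContinuousAt (fun y : E2 × E2 => q * ‖y.2‖ ^ (q-2) + δ*(2-q) * ‖y.1‖ ^ (2:ℝ) * ‖y.2‖ ^ (-q)) y) (continuous_snd : Continuous (fun y : E2 × E2 => y.2)).continuousAt
    refine ContinuousAt.add (continuousAt_const.mul (nt_contAtT hy _)) ?_
    exact (continuousAt_const.mul ((nt_contS (by norm_num : (0:ℝ) ≤ 2)).continuousAt)).mul
      (nt_contAtT hy _)
  have hW2at : ∀ y : E2 × E2, y.2 ≠ 0 → ContinuousAt
      (fun y : E2 × E2 => ((q + δ*(2-q)) * ‖y.2‖ ^ (q-2)) • y.2) y := by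
    intro y hy
    exact (continuousAt_const.mul (nt_contAtT hy _)).smul (continuous_snd : Continuous (fun y : E2 × E2 => y.2)).continuousAt
  rw [continuous_iff_continuousAt]
  intro w
  rcases lt_trichotomy (‖w.1‖ ^ p) (‖w.2‖ ^ q) with hlt | heq | hgt
  · have ht : w.2 ≠ 0 := by
      intro h; rw [h] at hlt
      simp only [norm_zero, Real.zero_rpow hq0] at hlt
      exact absurd hlt (not_lt.mpr (Real.rpow_nonneg (norm_nonneg _) _))
    have hopen : IsOpen {y : E2 × E2 | ‖y.1‖ ^ p < ‖y.2‖ ^ q} :=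
      isOpen_lt (nt_contS (by linarith)) (nt_contT (by linarith))
    have hev : ntW p q δ =ᶠ[𝓝 w]
        (fun y : E2 × E2 => (q * ‖y.2‖ ^ (q-2) + δ*(2-q) * ‖y.1‖ ^ (2:ℝ) * ‖y.2‖ ^ (-q)) • y.2) :=
      eventually_of_mem (hopen.mem_nhds hlt) (fun y hy => by
        simp only [Set.mem_setOf_eq] at hy
        simp [ntW, if_pos hy.le])
    exact (hW1at w ht).congr hev.symm
  · by_cases ht : w.2 = 0
    · have hs0 : ‖w.1‖ ^ p = 0 := by
        rw [heq, ht]; simp [Real.zero_rpow hq0]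
      have hs : w.1 = 0 := by
        by_contra h
        exact absurd hs0 (ne_of_gt (Real.rpow_pos_of_pos (norm_pos_iff.mpr h) p))
      have hw0 : w = 0 := by rw [Prod.ext_iff]; exact ⟨hs, ht⟩
      subst hw0
      have hgten : Filter.Tendsto (fun y : E2 × E2 => q * ‖y.2‖ ^ (q-1) + δ*(2-q) * ‖y.2‖ ^ (q/p)
          + (q + δ*(2-q)) * ‖y.2‖ ^ (q-1)) (𝓝 0) (𝓝 0) := by
        have hc : Continuous (fun y : E2 × E2 => q * ‖y.2‖ ^ (q-1) + δ*(2-q) * ‖y.2‖ ^ (q/p)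
            + (q + δ*(2-q)) * ‖y.2‖ ^ (q-1)) :=
          ((continuous_const.mul (nt_contT (by linarith))).add
            (continuous_const.mul (nt_contT (div_nonneg (by linarith) (by linarith))))).add
            (continuous_const.mul (nt_contT (by linarith)))
        have := hc.tendsto 0
        simpa [Real.zero_rpow (show q-1 ≠ 0 by intro h; apply (show q ≠ 1 by linarith); linarith),
          Real.zero_rpow (ne_of_gt (div_pos (by linarith : (0:ℝ) < q) (by linarith : (0:ℝ) < p)))]
          using this
      have h0 : ntW p q δ 0 = 0 := by simp [ntW]
      rw [ContinuousAt, h0]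
      exact squeeze_zero_norm (fun y => nt_W_bound hp hq hδ y) hgten
    · have ht' : 0 < ‖w.2‖ := norm_pos_iff.mpr ht
      have i2 := nt_id2 hp hq (norm_nonneg w.1) ht' heq
      refine nt_glue_cont (hW1at w ht) (hW2at w ht) ?_ ?_ ?_
      · simp [ntW, if_pos heq.le]
      · have hsc : (q + δ*(2-q)) * ‖w.2‖ ^ (q-2)
            = q * ‖w.2‖ ^ (q-2) + δ*(2-q) * ‖w.1‖ ^ (2:ℝ) * ‖w.2‖ ^ (-q) := by
          linear_combination (-(δ*(2-q))) * i2
        simp only [ntW, if_pos heq.le]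
        rw [hsc]
      · intro x
        by_cases hx : ‖x.1‖ ^ p ≤ ‖x.2‖ ^ q
        · left; simp [ntW, if_pos hx]
        · right; simp [ntW, if_neg hx]
  · have hopen : IsOpen {y : E2 × E2 | ‖y.2‖ ^ q < ‖y.1‖ ^ p} :=
      isOpen_lt (nt_contT (by linarith)) (nt_contS (by linarith))
    have hev : ntW p q δ =ᶠ[𝓝 w]
        (fun y : E2 × E2 => ((q + δ*(2-q)) * ‖y.2‖ ^ (q-2)) • y.2) :=
      eventually_of_mem (hopen.mem_nhds hgt) (fun y hy => by
        simp only [Set.mem_setOf_eq] at hy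
        simp [ntW, if_neg (not_le.mpr hy)])
    by_cases ht : w.2 = 0
    · have hW2 : ContinuousAt (fun y : E2 × E2 => ((q + δ*(2-q)) * ‖y.2‖ ^ (q-2)) • y.2) w := by
        have hval : ((q + δ*(2-q)) * ‖w.2‖ ^ (q-2)) • w.2 = (0 : E2) := by rw [ht]; simp
        rw [ContinuousAt, hval]
        refine squeeze_zero_norm (a := fun y : E2 × E2 => (q + δ*(2-q)) * ‖y.2‖ ^ (q-1))
          (fun y => ?_) ?_
        · rw [norm_smul, Real.norm_eq_abs,
            abs_of_nonneg (mul_nonneg (by nlinarith) (Real.rpow_nonneg (norm_nonneg _) _)),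
            mul_assoc, e1y y]
        · have hc : Continuous (fun y : E2 × E2 => (q + δ*(2-q)) * ‖y.2‖ ^ (q-1)) :=
            continuous_const.mul (nt_contT (by linarith))
          have := hc.tendsto w
          simpa [ht, Real.zero_rpow (show q-1 ≠ 0 by intro h; apply (show q ≠ 1 by linarith); linarith)]
            using this
      exact hW2.congr hev.symm
    · exact (hW2at w ht).congr hev.symm

lemma nt_contD : Continuous (ntD p q δ) := by
  have hV := nt_contV (δ := δ) hp hq
  have hW := nt_contW hp hq hδ
  have h1 : Continuous fun w : E2 × E2 => ntP1 (ntV p q δ w) := by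
    simp only [ntP1]
    exact (((innerSL ℝ (E := E2)).continuous).comp hV).clm_comp continuous_const
  have h2 : Continuous fun w : E2 × E2 => ntP2 (ntW p q δ w) := by
    simp only [ntP2]
    exact (((innerSL ℝ (E := E2)).continuous).comp hW).clm_comp continuous_const
  exact h1.add h2

end Cont2
end

/-- the Nazarov–Treil function `Q` is `C¹` on `ℝ⁴`. -/
theorem stmt16 (p q δ : ℝ) (hp : 2 < p) (hq : q = p / (p - 1)) (hδ : 0 < δ) :
    ContDiff ℝ 1 (NTQ p q δ) := by
  rw [contDiff_one_iff_fderiv]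
  refine ⟨fun w => (nt_hasD δ hp hq w).differentiableAt, ?_⟩
  have hfd : (fderiv ℝ (NTQ p q δ)) = ntD p q δ :=
    funext fun w => (nt_hasD δ hp hq w).fderiv
  rw [hfd]
  exact nt_contD hp hq hδ
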